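/- For all nodes u, v ∈ V_A ∪ C_B, the weighted distance in the virtual graph G'_A equals the weighted distance in G: wdist_{G'_A}(u, v) = wdist_G(u, v). -/

import Mathlib

open scoped ENNReal

/-- The weighted distance in the graph `H` with (extended-natural-valued)
weight function `w`: the infimum over all walks from `u` to `v` of the total
weight of the walk (the sum of the weights of its edges, counted with
multiplicity); it is `∞` when no walk exists. -/
noncomputable def wdist {V : Type*} (H : SimpleGraph V) (w : V → V → ℕ∞) (u v : V) : ℕ∞ :=
  ⨅ p : H.Walk u v, (p.darts.map (fun d => w d.fst d.snd)).sum

/-- The subgraph of `G` induced on the vertex set `S` (kept on the same vertex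
type: edges of `G` with both endpoints in `S`). -/
def inducedOn {V : Type*} (G : SimpleGraph V) (S : Set V) : SimpleGraph V :=
  SimpleGraph.fromRel (fun u v => G.Adj u v ∧ u ∈ S ∧ v ∈ S)

/-- `C_B`: the set of nodes of `V_B` incident to a cut edge (an edge of `G` with
one endpoint in `V_A` and the other in `V_B`). -/
def cutB {V : Type*} (G : SimpleGraph V) (VA VB : Set V) : Set V :=
  {v | v ∈ VB ∧ ∃ u ∈ VA, G.Adj u v}

/-- The virtual graph `G'_A`: its vertices are `V_A ∪ C_B`, with the edges of
`G_A`, the cut edges, and an edge between every two distinct nodes of `C_B`. -/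
def virtualA {V : Type*} (G : SimpleGraph V) (VA VB : Set V) : SimpleGraph V :=
  SimpleGraph.fromRel (fun u v =>
    (G.Adj u v ∧ u ∈ VA ∧ v ∈ VA) ∨
    (G.Adj u v ∧ u ∈ VA ∧ v ∈ cutB G VA VB) ∨
    (u ∈ cutB G VA VB ∧ v ∈ cutB G VA VB))

open Classical in
/-- The weight function `w'` of the virtual graph `G'_A`: the weight of an edge
between two nodes of `C_B` is the weighted distance between them in `G_B`, and
every other edge keeps its weight from `G`. -/
noncomputable def virtualWeight {V : Type*} (G : SimpleGraph V) (w : V → V → ℕ)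
    (VA VB : Set V) (u v : V) : ℕ∞ :=
  if u ∈ cutB G VA VB ∧ v ∈ cutB G VA VB then
    wdist (inducedOn G VB) (fun a b => (w a b : ℕ∞)) u v
  else (w u v : ℕ∞)

namespace WdistAux
variable {V : Type*} {H H' : SimpleGraph V} {w : V → V → ℕ∞} {u v x a b : V}

noncomputable def wsum (w : V → V → ℕ∞) {H : SimpleGraph V} {u v : V} (p : H.Walk u v) : ℕ∞ :=
  (p.darts.map (fun d => w d.fst d.snd)).sum

lemma wdist_eq (H : SimpleGraph V) (w : V → V → ℕ∞) (u v : V) :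
    wdist H w u v = ⨅ p : H.Walk u v, wsum w p := rfl

lemma wdist_le (p : H.Walk u v) : wdist H w u v ≤ wsum w p := iInf_le _ p

@[simp] lemma wsum_nil : wsum w (SimpleGraph.Walk.nil : H.Walk v v) = 0 := rfl

@[simp] lemma wsum_cons (h : H.Adj a b) (p : H.Walk b v) :
    wsum w (SimpleGraph.Walk.cons h p) = w a b + wsum w p := by
  simp [wsum]

@[simp] lemma wsum_append (p : H.Walk u x) (q : H.Walk x v) :
    wsum w (p.append q) = wsum w p + wsum w q := by
  simp [wsum, SimpleGraph.Walk.darts_append]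

lemma wdist_self_le : wdist H w v v ≤ 0 := by
  simpa using wdist_le (SimpleGraph.Walk.nil : H.Walk v v)

lemma wdist_le_edge (h : H.Adj u v) : wdist H w u v ≤ w u v := by
  simpa using wdist_le (SimpleGraph.Walk.cons h SimpleGraph.Walk.nil)

lemma exists_walk_le (h : wdist H w u v ≠ ⊤) :
    ∃ p : H.Walk u v, wsum w p ≤ wdist H w u v := by
  by_contra hc
  push_neg at hc
  have h1 : wdist H w u v + 1 ≤ wdist H w u v := by
    rw [wdist_eq]
    exact le_iInf fun p => ENat.add_one_le_iff h |>.mpr (hc p)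
  exact absurd (ENat.add_one_le_iff h |>.mp h1) (lt_irrefl _)

lemma wdist_triangle : wdist H w u v ≤ wdist H w u x + wdist H w x v := by
  rcases eq_or_ne (wdist H w u x) ⊤ with h1 | h1
  · simp [h1]
  rcases eq_or_ne (wdist H w x v) ⊤ with h2 | h2
  · simp [h2]
  obtain ⟨p, hp⟩ := exists_walk_le h1
  obtain ⟨q, hq⟩ := exists_walk_le h2
  calc wdist H w u v ≤ wsum w (p.append q) := wdist_le _
    _ = wsum w p + wsum w q := by simp
    _ ≤ _ := add_le_add hp hq

lemma wdist_le_wsum_of_le (hle : H ≤ H') (p : H.Walk u v) :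
    wdist H' w u v ≤ wsum w p := by
  induction p with
  | nil => simpa using (wdist_self_le : wdist H' w _ _ ≤ 0)
  | cons h p ih =>
    rw [wsum_cons]
    exact le_trans wdist_triangle (add_le_add (wdist_le_edge (hle h)) ih)

lemma wdist_mono (hle : H ≤ H') : wdist H' w u v ≤ wdist H w u v :=
  le_iInf fun p => wdist_le_wsum_of_le hle p

end WdistAux

open WdistAux

/-- for a finite weighted graph `G` whose vertices are partitioned
into `V_A ∪ V_B`, and for all nodes `u, v ∈ V_A ∪ C_B`, the weighted distance in
the virtual graph `G'_A` equals the weighted distance in `G`. -/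

theorem wdist_virtualA_eq_wdist {V : Type*} [Fintype V]
    (G : SimpleGraph V) (w : V → V → ℕ) (hw : ∀ u v, w u v = w v u)
    (VA VB : Set V) (hdisj : Disjoint VA VB) (hunion : VA ∪ VB = Set.univ)
    (u v : V) (hu : u ∈ VA ∪ cutB G VA VB) (hv : v ∈ VA ∪ cutB G VA VB) :
    wdist (virtualA G VA VB) (virtualWeight G w VA VB) u v =
      wdist G (fun a b => (w a b : ℕ∞)) u v := by
  classical
  set wG : V → V → ℕ∞ := fun a b => (w a b : ℕ∞) with hwG
  set vw := virtualWeight G w VA VB with hvw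
  set GV := virtualA G VA VB with hGV
  set GB := inducedOn G VB with hGB
  have hmem : ∀ x : V, x ∈ VA ∨ x ∈ VB := by
    intro x
    have : x ∈ VA ∪ VB := by rw [hunion]; exact Set.mem_univ x
    exact this
  have hnAB : ∀ {x : V}, x ∈ VA → x ∈ VB → False := fun hx hy =>
    Set.disjoint_left.mp hdisj hx hy
  have hcB : ∀ {x : V}, x ∈ cutB G VA VB → x ∈ VB := fun hx => hx.1
  have hnAc : ∀ {x : V}, x ∈ VA → x ∉ cutB G VA VB := fun hx hc => hnAB hx (hcB hc)
  -- basic edges in the virtual graph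
  have hedge_cc : ∀ {a b : V}, a ∈ cutB G VA VB → b ∈ cutB G VA VB →
      wdist GV vw a b ≤ wdist GB wG a b := by
    intro a b ha hb
    rcases eq_or_ne a b with rfl | hne
    · exact le_trans wdist_self_le zero_le
    · have hadj : GV.Adj a b := by
        rw [hGV, virtualA, SimpleGraph.fromRel_adj]
        exact ⟨hne, Or.inl (Or.inr (Or.inr ⟨ha, hb⟩))⟩
      have : vw a b = wdist GB wG a b := by
        rw [hvw, virtualWeight, if_pos ⟨ha, hb⟩]
      exact (wdist_le_edge hadj).trans_eq this
  have hedge_w : ∀ {a b : V}, GV.Adj a b → ¬(a ∈ cutB G VA VB ∧ b ∈ cutB G VA VB) →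
      wdist GV vw a b ≤ wG a b := by
    intro a b hadj hnc
    have : vw a b = wG a b := by rw [hvw, virtualWeight, if_neg hnc]
    exact (wdist_le_edge hadj).trans_eq this
  -- edges of GB
  have hGBadj : ∀ {a b : V}, G.Adj a b → a ∈ VB → b ∈ VB → GB.Adj a b := by
    intro a b h ha hb
    rw [hGB, inducedOn, SimpleGraph.fromRel_adj]
    exact ⟨h.ne, Or.inl ⟨h, ha, hb⟩⟩
  -- the key induction
  have key : ∀ {a c : V} (p : G.Walk a c), c ∈ VA ∪ cutB G VA VB →
      (a ∈ VA ∪ cutB G VA VB → wdist GV vw a c ≤ wsum wG p) ∧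
      (a ∈ VB → ∀ s ∈ cutB G VA VB, wdist GV vw s c ≤ wdist GB wG s a + wsum wG p) := by
    intro a c p
    induction p with
    | nil =>
      intro hc
      refine ⟨fun _ => by simpa using (wdist_self_le : wdist GV vw _ _ ≤ 0), ?_⟩
      intro ha s hs
      rw [wsum_nil, add_zero]
      rcases hc with hcc | hcc
      · exact absurd hcc (fun h' => hnAB h' ha)
      · exact hedge_cc hs hcc
    | @cons a x c h p ih =>
      intro hc
      have ih' := ih hc
      have part2 : a ∈ VB → ∀ s ∈ cutB G VA VB,
          wdist GV vw s c ≤ wdist GB wG s a + wsum wG (SimpleGraph.Walk.cons h p) := by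
        intro ha s hs
        rw [wsum_cons]
        rcases hmem x with hx | hx
        · -- x ∈ VA, so a ∈ cutB
          have hac : a ∈ cutB G VA VB := ⟨ha, x, hx, h.symm⟩
          have h1 : wdist GV vw s a ≤ wdist GB wG s a := hedge_cc hs hac
          have hax : GV.Adj a x := by
            rw [hGV, virtualA, SimpleGraph.fromRel_adj]
            exact ⟨fun he => hnAB hx (he ▸ ha), Or.inr (Or.inr (Or.inl ⟨h.symm, hx, hac⟩))⟩
          have h2 : wdist GV vw a x ≤ wG a x :=
            hedge_w hax (fun hcc => hnAc hx hcc.2)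
          have h3 : wdist GV vw x c ≤ wsum wG p := ih'.1 (Or.inl hx)
          calc wdist GV vw s c ≤ wdist GV vw s a + wdist GV vw a c := wdist_triangle
            _ ≤ wdist GV vw s a + (wdist GV vw a x + wdist GV vw x c) :=
                add_le_add_right wdist_triangle _
            _ ≤ wdist GB wG s a + (wG a x + wsum wG p) :=
                add_le_add h1 (add_le_add h2 h3)
        · -- x ∈ VB
          have hGBax : GB.Adj a x := hGBadj h ha hx
          have h1 : wdist GB wG s x ≤ wdist GB wG s a + wG a x :=
            le_trans wdist_triangle (add_le_add_right (wdist_le_edge hGBax) _)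
          calc wdist GV vw s c ≤ wdist GB wG s x + wsum wG p := ih'.2 hx s hs
            _ ≤ (wdist GB wG s a + wG a x) + wsum wG p := add_le_add_left h1 _
            _ = wdist GB wG s a + (wG a x + wsum wG p) := by ring
      refine ⟨?_, part2⟩
      intro ha
      rcases ha with ha | ha
      · -- a ∈ VA
        rw [wsum_cons]
        rcases hmem x with hx | hx
        · have hax : GV.Adj a x := by
            rw [hGV, virtualA, SimpleGraph.fromRel_adj]
            exact ⟨h.ne, Or.inl (Or.inl ⟨h, ha, hx⟩)⟩
          have h2 : wdist GV vw a x ≤ wG a x := hedge_w hax (fun hcc => hnAc ha hcc.1)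
          exact le_trans wdist_triangle (add_le_add h2 (ih'.1 (Or.inl hx)))
        · have hxc : x ∈ cutB G VA VB := ⟨hx, a, ha, h⟩
          have hax : GV.Adj a x := by
            rw [hGV, virtualA, SimpleGraph.fromRel_adj]
            exact ⟨h.ne, Or.inl (Or.inr (Or.inl ⟨h, ha, hxc⟩))⟩
          have h2 : wdist GV vw a x ≤ wG a x := hedge_w hax (fun hcc => hnAc ha hcc.1)
          exact le_trans wdist_triangle (add_le_add h2 (ih'.1 (Or.inr hxc)))
      · -- a ∈ cutB
        have := part2 (hcB ha) a ha
        calc wdist GV vw a c ≤ wdist GB wG a a + wsum wG (SimpleGraph.Walk.cons h p) := this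
          _ ≤ 0 + wsum wG (SimpleGraph.Walk.cons h p) := add_le_add_left wdist_self_le _
          _ = wsum wG (SimpleGraph.Walk.cons h p) := by rw [zero_add]
  -- conclude
  apply le_antisymm
  · rw [wdist_eq G]
    exact le_iInf fun p => (key p hv).1 hu
  · rw [wdist_eq GV]
    refine le_iInf fun q => ?_
    clear hu hv
    induction q with
    | nil => simpa using (wdist_self_le : wdist G wG _ _ ≤ 0)
    | @cons a b c hadj q ih =>
      rw [wsum_cons]
      refine le_trans wdist_triangle (add_le_add ?_ ih)
      by_cases hcc : a ∈ cutB G VA VB ∧ b ∈ cutB G VA VB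
      · have hvweq : vw a b = wdist GB wG a b := by rw [hvw, virtualWeight, if_pos hcc]
        rw [hvweq]
        exact wdist_mono (by
          intro x y hxy
          rw [hGB, inducedOn, SimpleGraph.fromRel_adj] at hxy
          rcases hxy.2 with h | h
          · exact h.1
          · exact h.1.symm)
      · have hvweq : vw a b = wG a b := by rw [hvw, virtualWeight, if_neg hcc]
        rw [hvweq]
        have hGadj : G.Adj a b := by
          rw [hGV, virtualA, SimpleGraph.fromRel_adj] at hadj
          rcases hadj.2 with (⟨h,_⟩|⟨h,_⟩|h3) | (⟨h,_⟩|⟨h,_⟩|h3)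
          · exact h
          · exact h
          · exact absurd h3 hcc
          · exact h.symm
          · exact h.symm
          · exact absurd ⟨h3.2, h3.1⟩ hcc
        exact wdist_le_edge hGadj
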